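/- The data (124, 957, √13852800, 3845) is an edge cuboid: 124² + 957² = 965², 124² + 13852800 = 3724², 957² + 13852800 = 3843², 124² + 957² + 13852800 = 3845², and 13852800 is not the square of any integer. -/
import Mathlib


theorem edge_cuboid_124_957 :
    124 ^ 2 + 957 ^ 2 = 965 ^ 2 ∧
    124 ^ 2 + 13852800 = 3724 ^ 2 ∧
    957 ^ 2 + 13852800 = 3843 ^ 2 ∧
    124 ^ 2 + 957 ^ 2 + 13852800 = 3845 ^ 2 ∧
    ¬ ∃ k : ℤ, k ^ 2 = 13852800 := by
  refine ⟨by norm_num, by norm_num, by norm_num, by norm_num, ?_⟩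
  rintro ⟨k, hk⟩
  have h1 : (3721 : ℤ) ^ 2 < k ^ 2 := by rw [hk]; norm_num
  have h2 : k ^ 2 < (3722 : ℤ) ^ 2 := by rw [hk]; norm_num
  have hab : |k| ≤ 3721 ∨ 3722 ≤ |k| := by
    rcases le_or_gt (|k|) 3721 with h | h
    · exact Or.inl h
    · exact Or.inr h
  rcases hab with h | h
  · have := pow_le_pow_left₀ (abs_nonneg k) h 2
    simp [sq_abs] at this
    omega
  · have := pow_le_pow_left₀ (by norm_num : (0:ℤ) ≤ 3722) h 2
    simp [sq_abs] at this
    omega
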